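/- arXiv:2603.28260 — 2 statements merged into one kernel-verified Lean document; each statement's English description precedes it below -/
import Mathlib

section
/- Let n ≥ 3 and view the vertices of an oriented n-ring as ZMod n with the leader at 0, where edge i is {i, i+1} and, for a vertex w ≠ 0, its two arc-distances to the leader are (w.val) and (n − w.val). For every Finset S of ZMod n (a set of edges, indexed by their first endpoint) with S.card ≥ 5, there exist i ∈ S and an endpoint w ∈ {i, i+1} such that w ≠ 0 and 2 * max (w.val) (n - w.val) ≥ n + 2. -/
/-- Among any five edges of an oriented `n`-ring (vertices `ZMod n`, leader at `0`,
edge `i = {i, i+1}`), some edge has an endpoint `w ≠ 0` whose longer arc-distance to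
the leader is at least `n/2 + 1` (integer form: `2 * max w.val (n - w.val) ≥ n + 2`). -/
theorem stmt_5 (n : ℕ) (hn : 3 ≤ n) (S : Finset (ZMod n)) (hS : 5 ≤ S.card) :
    ∃ i ∈ S, ∃ w ∈ ({i, i + 1} : Finset (ZMod n)),
      w ≠ 0 ∧ 2 * max w.val (n - w.val) ≥ n + 2 := by
  haveI : NeZero n := ⟨by omega⟩
  by_contra hcon
  push_neg at hcon
  set T : Finset ℕ := {0, (n-1)/2, n/2, (n+1)/2} with hT
  have hsub : S ⊆ T.image (fun k : ℕ => (k : ZMod n)) := by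
    intro i hi
    have hbad := hcon i hi i (by simp)
    refine Finset.mem_image.2 ⟨i.val, ?_, ZMod.natCast_rightInverse i⟩
    by_cases h0 : i = 0
    · simp [hT, h0]
    · have h := hbad h0
      have hv : i.val < n := ZMod.val_lt i
      have hv0 : i.val ≠ 0 := fun h' => h0 (by
        have := ZMod.natCast_rightInverse i
        rw [← this, h']; simp)
      have h1 : 2 * i.val < n + 2 := lt_of_le_of_lt (by
        exact Nat.mul_le_mul_left 2 (le_max_left _ _)) h
      have h2 : 2 * (n - i.val) < n + 2 := lt_of_le_of_lt (by
        exact Nat.mul_le_mul_left 2 (le_max_right _ _)) h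
      simp only [hT, Finset.mem_insert, Finset.mem_singleton]
      omega
  have hcard : S.card ≤ T.card := le_trans (Finset.card_le_card hsub)
    (Finset.card_image_le)
  have : T.card ≤ 4 := by
    refine le_trans (Finset.card_insert_le _ _) ?_
    refine Nat.succ_le_succ (le_trans (Finset.card_insert_le _ _) ?_)
    refine Nat.succ_le_succ (le_trans (Finset.card_insert_le _ _) ?_)
    simp
  omega
end

section
/- For every natural number λ, the sum of the iterates of the base-2 logarithm starting at λ is at most 2λ: ∑_{j ∈ Finset.range (λ + 1)} ((Nat.log 2)^[j] λ) ≤ 2 * λ, where (Nat.log 2)^[j] denotes the j-fold iterate of m ↦ Nat.log 2 m. -/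
lemma iter_log_eq_zero : ∀ j n : ℕ, n ≤ j → (Nat.log 2)^[j] n = 0 := by
  intro j
  induction j with
  | zero => intro n hn; simpa using Nat.le_zero.mp hn
  | succ j ih =>
    intro n hn
    rw [Function.iterate_succ_apply]
    rcases Nat.eq_zero_or_pos n with h | h
    · subst h; exact ih _ (by simp)
    · exact ih _ (Nat.le_trans (Nat.le_of_lt_succ (Nat.lt_of_lt_of_le (Nat.log_lt_self 2 h.ne') hn)) (le_refl j))

lemma two_mul_le_two_pow (k : ℕ) : 2 * k ≤ 2 ^ k := by
  induction k with
  | zero => simp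
  | succ k ih =>
    rcases Nat.eq_zero_or_pos k with h | h
    · subst h; simp
    · calc 2 * (k + 1) = 2 * k + 2 := by ring
        _ ≤ 2 ^ k + 2 ^ k := by
          refine Nat.add_le_add ih ?_
          calc (2:ℕ) = 2 * 1 := by ring
            _ ≤ 2 * k := by omega
            _ ≤ 2 ^ k := ih
        _ = 2 ^ (k + 1) := by ring

lemma two_log_le (n : ℕ) (h : 1 ≤ n) : 2 * Nat.log 2 n ≤ n :=
  le_trans (two_mul_le_two_pow _) (Nat.pow_log_le_self 2 (by omega))

/-- The sum of the iterates of the base-2 logarithm starting at `λ` is at most `2λ`: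
`∑ j in range (λ+1), (Nat.log 2)^[j] λ ≤ 2 * λ`. -/
theorem stmt_8 (lam : ℕ) :
    ∑ j ∈ Finset.range (lam + 1), (Nat.log 2)^[j] lam ≤ 2 * lam := by
  induction lam using Nat.strong_induction_on with
  | _ lam ih =>
    rcases Nat.eq_zero_or_pos lam with h0 | h0
    · subst h0; simp
    · set m := Nat.log 2 lam with hm
      have hmlt : m < lam := Nat.log_lt_self 2 h0.ne'
      have step : ∑ j ∈ Finset.range (lam + 1), (Nat.log 2)^[j] lam
          = lam + ∑ j ∈ Finset.range lam, (Nat.log 2)^[j] m := by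
        rw [Finset.sum_range_succ', add_comm]
        simp [Function.iterate_succ_apply, hm]
      rw [step]
      have hsplit : ∑ j ∈ Finset.range lam, (Nat.log 2)^[j] m
          = ∑ j ∈ Finset.range (m + 1), (Nat.log 2)^[j] m := by
        rcases Nat.exists_eq_add_of_le (Nat.succ_le_of_lt hmlt) with ⟨k, hk⟩
        rw [hk, Finset.sum_range_add]
        have h0' : ∑ j ∈ Finset.range k, (Nat.log 2)^[m + 1 + j] m = 0 := by
          apply Finset.sum_eq_zero
          intro j _
          exact iter_log_eq_zero _ _ (by omega)
        simp only [Nat.succ_eq_add_one] at *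
        rw [h0', add_zero]
      rw [hsplit]
      have := ih m hmlt
      have h2 := two_log_le lam h0
      omega
end
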